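/- For any real t > 1/2, Σ_{α=1}^{N} (λ_{α+1} − λ₁) ∫_Ω |∇z_α|² u₁^{t+1} ≥ ( Σ_{j=1}^{n} (λ_{j+1} − λ₁) ) ∫_Ω u₁^{t+1}. -/
import Mathlib


open MeasureTheory

lemma bathtub_lower_bound (n N : ℕ) (hn : 1 ≤ n) (hnN : n ≤ N) (lam : ℕ → ℝ)
    (hmono : ∀ i j, 1 ≤ i → i ≤ j → lam i ≤ lam j)
    (a : ℕ → ℝ) (ha0 : ∀ α, 0 ≤ a α) (ha1 : ∀ α, a α ≤ 1)
    (hsum : ∑ α ∈ Finset.Icc 1 N, a α = n) :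
    ∑ j ∈ Finset.Icc 1 n, (lam (j + 1) - lam 1) ≤
      ∑ α ∈ Finset.Icc 1 N, (lam (α + 1) - lam 1) * a α := by
  set C : ℝ := lam (n + 1) - lam 1 with hCdef
  have hsplit : ∀ f : ℕ → ℝ, ∑ α ∈ Finset.Icc 1 N, f α =
      ∑ α ∈ Finset.Icc 1 n, f α + ∑ α ∈ Finset.Ioc n N, f α := by
    intro f
    have hu : Finset.Icc 1 N = Finset.Icc 1 n ∪ Finset.Ioc n N := by
      ext x
      simp only [Finset.mem_Icc, Finset.mem_Ioc, Finset.mem_union]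
      omega
    rw [hu, Finset.sum_union (by
      rw [Finset.disjoint_left]
      intro x hx hx'
      simp only [Finset.mem_Icc, Finset.mem_Ioc] at hx hx'
      omega)]
  have hcard : (Finset.Icc 1 n).card = n := by simp
  have h1 : ∑ α ∈ Finset.Icc 1 n, (lam (α + 1) - lam 1 - C * (1 - a α)) ≤
      ∑ α ∈ Finset.Icc 1 n, (lam (α + 1) - lam 1) * a α := by
    apply Finset.sum_le_sum
    intro α hα
    have hα' := Finset.mem_Icc.mp hα
    have hcC : lam (α + 1) - lam 1 ≤ C :=
      sub_le_sub_right (hmono (α + 1) (n + 1) (by omega) (by omega)) _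
    nlinarith [ha0 α, ha1 α]
  have h2 : ∑ α ∈ Finset.Ioc n N, C * a α ≤
      ∑ α ∈ Finset.Ioc n N, (lam (α + 1) - lam 1) * a α := by
    apply Finset.sum_le_sum
    intro α hα
    have hα' := Finset.mem_Ioc.mp hα
    have : C ≤ lam (α + 1) - lam 1 :=
      sub_le_sub_right (hmono (n + 1) (α + 1) (by omega) (by omega)) _
    exact mul_le_mul_of_nonneg_right this (ha0 α)
  have e1 : ∑ α ∈ Finset.Icc 1 n, (lam (α + 1) - lam 1 - C * (1 - a α)) =
      (∑ α ∈ Finset.Icc 1 n, (lam (α + 1) - lam 1)) - C * n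
        + C * ∑ α ∈ Finset.Icc 1 n, a α := by
    have e1' : ∑ α ∈ Finset.Icc 1 n, C * (1 - a α) =
        C * n - C * ∑ α ∈ Finset.Icc 1 n, a α := by
      simp only [mul_sub, mul_one]
      rw [Finset.sum_sub_distrib, Finset.sum_const, hcard, nsmul_eq_mul, ← Finset.mul_sum]
      ring
    rw [Finset.sum_sub_distrib, e1']
    ring
  have e2 : ∑ α ∈ Finset.Ioc n N, C * a α = C * ∑ α ∈ Finset.Ioc n N, a α :=
    (Finset.mul_sum _ _ _).symm
  have hsum' : ∑ α ∈ Finset.Icc 1 n, a α + ∑ α ∈ Finset.Ioc n N, a α = n := by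
    rw [← hsplit a]; exact hsum
  have := hsplit (fun α => (lam (α + 1) - lam 1) * a α)
  rw [this]
  have hCn : C * (∑ α ∈ Finset.Icc 1 n, a α) + C * (∑ α ∈ Finset.Ioc n N, a α) = C * n := by
    rw [← mul_add, hsum']
  linarith [h1, h2]

/-- inequality (2.12) of Cheng–Qi.
Setting: `Ω` is a bounded domain in an `n`-dimensional complete Riemannian manifold
isometrically immersed in `ℝ^N`, `lam j` its Dirichlet eigenvalues
(`0 < λ₁ < λ₂ ≤ λ₃ ≤ ⋯`), `u1` the first eigenfunction (`u1 > 0` in `Ω`), and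
`gz α = |∇z_α|²` for the translated rotated coordinate functions `z_α`; these satisfy
`0 ≤ |∇z_α|² ≤ 1` and `Σ_{α=1}^N |∇z_α|² = n` pointwise.
Conclusion: for any real `t > 1/2`,
`Σ_{α=1}^N (λ_{α+1} − λ₁)∫_Ω |∇z_α|²u₁^{t+1} ≥ (Σ_{j=1}^n (λ_{j+1} − λ₁))∫_Ω u₁^{t+1}`. -/
theorem weighted_gradient_sum_lower_bound
    (n N : ℕ) (hn : 1 ≤ n) (hnN : n ≤ N)
    (Ω : Type*) [MeasureSpace Ω]
    (lam : ℕ → ℝ) (hlam1 : 0 < lam 1) (hlam12 : lam 1 < lam 2)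
    (hmono : ∀ i j, 1 ≤ i → i ≤ j → lam i ≤ lam j)
    (u1 : Ω → ℝ) (hu1 : ∀ x, 0 < u1 x)
    (t : ℝ) (ht : 1 / 2 < t)
    (gz : ℕ → Ω → ℝ)
    (hgz0 : ∀ α x, 0 ≤ gz α x) (hgz1 : ∀ α x, gz α x ≤ 1)
    (hgzsum : ∀ x, ∑ α ∈ Finset.Icc 1 N, gz α x = n)
    (hint : ∀ α, Integrable (fun x => gz α x * u1 x ^ (t + 1)))
    (hint' : Integrable (fun x => u1 x ^ (t + 1))) :
    ∑ α ∈ Finset.Icc 1 N, (lam (α + 1) - lam 1) * ∫ x, gz α x * u1 x ^ (t + 1) ≥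
      (∑ j ∈ Finset.Icc 1 n, (lam (j + 1) - lam 1)) * ∫ x, u1 x ^ (t + 1) := by
  have hLHS : ∑ α ∈ Finset.Icc 1 N, (lam (α + 1) - lam 1) * ∫ x, gz α x * u1 x ^ (t + 1)
      = ∫ x, ∑ α ∈ Finset.Icc 1 N, (lam (α + 1) - lam 1) * (gz α x * u1 x ^ (t + 1)) := by
    rw [integral_finset_sum]
    · exact Finset.sum_congr rfl fun α _ => (integral_const_mul _ _).symm
    · intro α _
      exact (hint α).const_mul _
  rw [hLHS, ge_iff_le, ← integral_const_mul]
  apply integral_mono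
  · exact hint'.const_mul _
  · exact integrable_finset_sum _ fun α _ => (hint α).const_mul _
  · intro x
    have hupow : 0 ≤ u1 x ^ (t + 1) := Real.rpow_nonneg (hu1 x).le _
    have key := bathtub_lower_bound n N hn hnN lam hmono (fun α => gz α x)
      (fun α => hgz0 α x) (fun α => hgz1 α x) (hgzsum x)
    calc (∑ j ∈ Finset.Icc 1 n, (lam (j + 1) - lam 1)) * u1 x ^ (t + 1)
        ≤ (∑ α ∈ Finset.Icc 1 N, (lam (α + 1) - lam 1) * gz α x) * u1 x ^ (t + 1) :=
          mul_le_mul_of_nonneg_right key hupow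
      _ = ∑ α ∈ Finset.Icc 1 N, (lam (α + 1) - lam 1) * (gz α x * u1 x ^ (t + 1)) := by
          rw [Finset.sum_mul]; simp [mul_assoc]
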